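/- arXiv:1911.08254 — 5 statements merged into one kernel-verified Lean document; each statement's English description precedes it below -/
import Mathlib

section
/- Let A be a C*-algebra, a ∈ A an arbitrary element, and p, q ∈ A two projections. If a = a p q, then a = a p. -/
/-- In a C*-algebra, if `a = a * p * q` for projections `p, q`, then `a = a * p`. -/
theorem cstar_apq {A : Type*} [NonUnitalNormedRing A] [StarRing A] [CStarRing A]
    [CompleteSpace A] [NormedSpace ℂ A] [IsScalarTower ℂ A A] [SMulCommClass ℂ A A]
    [StarModule ℂ A]
    (a p q : A) (hp1 : star p = p) (hp2 : p * p = p) (hq1 : star q = q) (hq2 : q * q = q)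
    (h : a = a * p * q) : a = a * p := by
  have hs : star a = q * (p * star a) := by
    conv_lhs => rw [h]
    simp [star_mul, hp1, hq1, mul_assoc]
  have key : a * star a = a * p * star a := by
    have e1 : a * star a = a * p * q * (q * (p * star a)) := by rw [← h, ← hs]
    have e2 : a * p * star a = a * p * (q * (p * star a)) := by rw [← hs]
    rw [e1, e2]
    simp only [mul_assoc]
    rw [← mul_assoc q q, hq2]
  have key2 : (a - a * p) * star (a - a * p) = 0 := by
    rw [star_sub, star_mul, hp1]
    rw [mul_sub, sub_mul, sub_mul]
    rw [show a * p * (p * star a) = a * p * star a by rw [← mul_assoc, mul_assoc a p p, hp2]]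
    rw [show a * (p * star a) = a * p * star a by rw [mul_assoc]]
    rw [key]
    abel
  have hn : ‖a - a * p‖ = 0 := by
    have := CStarRing.norm_self_mul_star (x := a - a * p)
    rw [key2, norm_zero] at this
    nlinarith [norm_nonneg (a - a * p)]
  exact sub_eq_zero.mp (norm_eq_zero.mp hn)
end

section
/- Let u and e be partial isometries in a C*-algebra A. Then (1/2)(u u* e + e u* u) = u holds if and only if u = u u* e and u = e u* u. -/
variable {A : Type*} [NonUnitalNormedRing A] [StarRing A] [CStarRing A]
    [CompleteSpace A] [NormedSpace ℂ A] [IsScalarTower ℂ A A] [SMulCommClass ℂ A A]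
    [StarModule ℂ A]

/-- For partial isometries `u, e`: `(1/2)(u u* e + e u* u) = u` iff
`u = u u* e` and `u = e u* u`. -/
theorem partialIsometry_half_sum_iff
    (u e : A) (hu : u * star u * u = u) (he : e * star e * e = e) :
    ((1 / 2 : ℂ) • (u * star u * e + e * (star u * u)) = u) ↔
    (u = u * star u * e ∧ u = e * (star u * u)) := by
  constructor
  · intro h
    have h2 : u * star u * e + e * (star u * u) = (2 : ℂ) • u := by
      have := congrArg (fun x => (2 : ℂ) • x) h
      simpa [smul_smul] using this
    -- multiply on the left by p = u * star u
    have hL : u * star u * e + (u * star u * e) * (star u * u) = (2 : ℂ) • u := by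
      have := congrArg (fun x => (u * star u) * x) h2
      simp only [mul_add, mul_smul_comm] at this
      calc u * star u * e + (u * star u * e) * (star u * u)
          = u * star u * (u * star u * e) + u * star u * (e * (star u * u)) := by
            rw [show u * star u * (u * star u * e) = (u * star u * u) * (star u * e) by
              simp [mul_assoc], hu]
            simp [mul_assoc]
        _ = (2 : ℂ) • (u * star u * u) := by rw [this, mul_assoc]
        _ = (2 : ℂ) • u := by rw [hu]
    -- multiply on the right by q = star u * u
    have hR : (u * star u * e) * (star u * u) + e * (star u * u) = (2 : ℂ) • u := by
      have := congrArg (fun x => x * (star u * u)) h2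
      simp only [add_mul, smul_mul_assoc] at this
      calc (u * star u * e) * (star u * u) + e * (star u * u)
          = (u * star u * e) * (star u * u) + (e * (star u * u)) * (star u * u) := by
            rw [show (e * (star u * u)) * (star u * u) = e * (star u * (u * star u * u)) by
              simp [mul_assoc], hu]
        _ = (2 : ℂ) • (u * (star u * u)) := this
        _ = (2 : ℂ) • u := by rw [← mul_assoc, hu]
    have heq : u * star u * e = e * (star u * u) := by
      have := hL.trans hR.symm
      exact add_right_cancel (add_left_cancel (by linear_combination (norm := abel) this))
    have h3 : (2 : ℂ) • (u * star u * e) = (2 : ℂ) • u := by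
      rw [two_smul, two_smul]
      calc u * star u * e + u * star u * e = u * star u * e + e * (star u * u) := by rw [heq]
        _ = (2 : ℂ) • u := h2
        _ = u + u := by rw [two_smul]
    have h4 : u * star u * e = u := smul_right_injective A (by norm_num) h3
    exact ⟨h4.symm, (heq ▸ h4).symm⟩
  · rintro ⟨h1, h2⟩
    rw [← h1, ← h2, smul_add, ← add_smul]
    norm_num
end

section
/- Let u and e be partial isometries in a C*-algebra A. Then u e* = 0 and e* u = 0 hold if and only if both u + e and u − e are partial isometries. -/
variable {A : Type*} [NonUnitalNormedRing A] [StarRing A] [CStarRing A]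
    [CompleteSpace A] [NormedSpace ℂ A] [IsScalarTower ℂ A A] [SMulCommClass ℂ A A]
    [StarModule ℂ A]

private lemma half_zero (x : A) (h : x + x = 0) : x = 0 := by
  have h2 : (2:ℂ) • x = 0 := by rw [two_smul]; exact h
  calc x = (2:ℂ)⁻¹ • ((2:ℂ) • x) := by
        rw [smul_smul, inv_mul_cancel₀ (two_ne_zero), one_smul]
    _ = 0 := by rw [h2, smul_zero]

private lemma third_zero (x : A) (h : x + x + x = 0) : x = 0 := by
  have h3 : (3:ℂ) • x = 0 := by
    rw [show (3:ℂ) = 2 + 1 by norm_num, add_smul, two_smul, one_smul]; exact h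
  calc x = (3:ℂ)⁻¹ • ((3:ℂ) • x) := by
        rw [smul_smul, inv_mul_cancel₀ (by norm_num), one_smul]
    _ = 0 := by rw [h3, smul_zero]

/-- For partial isometries `u, e`: `u e* = 0` and `e* u = 0` iff both `u + e`
and `u - e` are partial isometries. -/
theorem partialIsometry_orthogonal_iff_sum_diff
    (u e : A) (hu : u * star u * u = u) (he : e * star e * e = e) :
    (u * star e = 0 ∧ star e * u = 0) ↔
    ((u + e) * star (u + e) * (u + e) = u + e ∧
      (u - e) * star (u - e) * (u - e) = u - e) := by
  constructor
  · rintro ⟨z1, z2⟩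
    have z3 : e * star u = 0 := by
      have := congrArg star z1
      simpa [star_mul] using this
    have z4 : star u * e = 0 := by
      have := congrArg star z2
      simpa [star_mul] using this
    constructor
    · calc (u + e) * star (u + e) * (u + e)
          = u * star u * u + e * star e * e + (u * star e) * u + (u * star e) * e
            + (e * star u) * u + (e * star u) * e + u * (star u * e)
            + e * (star e * u) := by
            simp only [star_add]; noncomm_ring
        _ = u + e := by rw [hu, he, z1, z2, z3, z4]; simp
    · calc (u - e) * star (u - e) * (u - e)
          = u * star u * u - e * star e * e - (u * star e) * u + (u * star e) * e
            - (e * star u) * u + (e * star u) * e - u * (star u * e)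
            + e * (star e * u) := by
            simp only [star_sub]; noncomm_ring
        _ = u - e := by rw [hu, he, z1, z2, z3, z4]; simp
  · rintro ⟨hp, hm⟩
    -- E := u e* e + e u* e + e e* u = 0
    have hE2 : (u * star e * e + e * star u * e + e * star e * u)
        + (u * star e * e + e * star u * e + e * star e * u) = 0 := by
      calc (u * star e * e + e * star u * e + e * star e * u)
            + (u * star e * e + e * star u * e + e * star e * u)
          = ((u + e) * star (u + e) * (u + e) - (u + e))
            + ((u - e) * star (u - e) * (u - e) - (u - e))
            - (u * star u * u - u) - (u * star u * u - u) := by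
            simp only [star_add, star_sub]; noncomm_ring
        _ = 0 := by rw [hp, hm, hu]; simp
    have hA1 : u * star e * e + e * star u * e + e * star e * u = 0 :=
      half_zero _ hE2
    -- F1 : u r - s u r = 0
    have F1 : u * star e * e - e * star e * (u * star e * e) = 0 := by
      calc u * star e * e - e * star e * (u * star e * e)
          = (u * star e * e + e * star u * e + e * star e * u)
            - e * star e * (u * star e * e + e * star u * e + e * star e * u)
            + (e * star e * e - e) * (star u * e)
            + (e * star e * e - e) * (star e * u) := by noncomm_ring
        _ = 0 := by rw [hA1, he]; simp
    -- F2 : s u - s u r = 0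
    have F2 : e * star e * u - e * star e * (u * star e * e) = 0 := by
      calc e * star e * u - e * star e * (u * star e * e)
          = (u * star e * e + e * star u * e + e * star e * u)
            - (u * star e * e + e * star u * e + e * star e * u) * (star e * e)
            + (u * star e) * (e * star e * e - e)
            + (e * star u) * (e * star e * e - e) := by noncomm_ring
        _ = 0 := by rw [hA1, he]; simp
    -- F3 : e u* e + 2 u e* e = 0
    have F3 : e * star u * e + (u * star e * e + u * star e * e) = 0 := by
      calc e * star u * e + (u * star e * e + u * star e * e)
          = (u * star e * e + e * star u * e + e * star e * u)
            - (e * star e * u - e * star e * (u * star e * e))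
            + (u * star e * e - e * star e * (u * star e * e)) := by noncomm_ring
        _ = 0 := by rw [hA1, F1, F2]; simp
    -- star of F3
    have F3s : star e * u * star e + (star e * e * star u + star e * e * star u) = 0 := by
      have h' := congrArg star F3
      rw [star_zero] at h'
      calc star e * u * star e + (star e * e * star u + star e * e * star u)
          = star (e * star u * e + (u * star e * e + u * star e * e)) := by
            simp only [star_add, star_mul, star_star]; noncomm_ring
        _ = 0 := h'
    -- F5 : 3 (e* e u* e) = 0
    have F5 : star e * e * star u * e + star e * e * star u * e
        + star e * e * star u * e = 0 := by
      calc star e * e * star u * e + star e * e * star u * e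
            + star e * e * star u * e
          = ((star e * u * star e + (star e * e * star u + star e * e * star u)) * e
            + (star e * u * star e + (star e * e * star u + star e * e * star u)) * e)
            - star e * (e * star u * e + (u * star e * e + u * star e * e)) := by
            noncomm_ring
        _ = 0 := by rw [F3s, F3]; simp
    have F6 : star e * e * star u * e = 0 := third_zero _ F5
    -- F7 : e u* e = 0
    have F7 : e * star u * e = 0 := by
      calc e * star u * e
          = e * (star e * e * star u * e) - (e * star e * e - e) * (star u * e) := by
            noncomm_ring
        _ = 0 := by rw [F6, he]; simp
    -- F8 : 2 u e* e = 0
    have F8 : u * star e * e + u * star e * e = 0 := by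
      calc u * star e * e + u * star e * e
          = (e * star u * e + (u * star e * e + u * star e * e))
            - e * star u * e := by noncomm_ring
        _ = 0 := by rw [F3, F7]; simp
    have F9 : u * star e * e = 0 := half_zero _ F8
    have hes : star e * e * star e = star e := by
      have h' := congrArg star he
      calc star e * e * star e = star (e * star e * e) := by
            simp only [star_mul, star_star]; noncomm_ring
        _ = star e := h'
    have G1 : u * star e = 0 := by
      calc u * star e
          = (u * star e * e) * star e - u * (star e * e * star e - star e) := by
            noncomm_ring
        _ = 0 := by rw [F9, hes]; simp
    have F10 : e * star e * u = 0 := by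
      calc e * star e * u
          = (e * star e * u - e * star e * (u * star e * e))
            - (u * star e * e - e * star e * (u * star e * e))
            + u * star e * e := by noncomm_ring
        _ = 0 := by rw [F2, F1, F9]; simp
    have G2 : star e * u = 0 := by
      calc star e * u
          = star e * (e * star e * u) - (star e * e * star e - star e) * u := by
            noncomm_ring
        _ = 0 := by rw [F10, hes]; simp
    exact ⟨G1, G2⟩
end

section
/- Let H be a finite-dimensional complex Hilbert space with a distinguished orthonormal basis, and for x ∈ H let x̄ denote coordinatewise conjugation. Define the spin triple product {x,y,z} = ⟨x,y⟩z + ⟨z,y⟩x − ⟨x, z̄⟩ȳ. If u ∈ H is a nonzero element with {u,u,u} = u, then either ū is a scalar multiple of u, or ⟨u, ū⟩ = 0 and ⟨u,u⟩ = 1/2. -/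
open scoped ComplexConjugate

/-- Inner product on `ℂ^n`, linear in the first variable. -/
noncomputable def spinIp {n : ℕ} (x y : Fin n → ℂ) : ℂ := ∑ i, x i * conj (y i)

/-- Coordinatewise conjugation on `ℂ^n`. -/
noncomputable def spinConj {n : ℕ} (x : Fin n → ℂ) : Fin n → ℂ := fun i => conj (x i)

/-- The spin triple product `{x,y,z} = ⟨x,y⟩z + ⟨z,y⟩x − ⟨x, z̄⟩ȳ`. -/
noncomputable def spinTriple {n : ℕ} (x y z : Fin n → ℂ) : Fin n → ℂ :=
  spinIp x y • z + spinIp z y • x - spinIp x (spinConj z) • spinConj y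

/-- A nonzero tripotent of the spin factor is either a multiple of a real vector
(`ū` is a scalar multiple of `u`) or minimal (`⟨u, ū⟩ = 0` and `⟨u,u⟩ = 1/2`). -/
theorem spin_tripotent_dichotomy {n : ℕ} (u : Fin n → ℂ) (hu0 : u ≠ 0)
    (hu : spinTriple u u u = u) :
    (∃ α : ℂ, spinConj u = α • u) ∨
    (spinIp u (spinConj u) = 0 ∧ spinIp u u = 1 / 2) := by
  set a := spinIp u u with ha
  set b := spinIp u (spinConj u) with hb
  have key : ∀ i, (2 * a - 1) * u i = b * spinConj u i := by
    intro i
    have h := congrFun hu i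
    simp only [spinTriple, Pi.add_apply, Pi.sub_apply, Pi.smul_apply, smul_eq_mul, ← ha, ← hb]
      at h
    ring_nf
    ring_nf at h
    linear_combination h
  by_cases hbz : b = 0
  · right
    refine ⟨hbz, ?_⟩
    have hua : 2 * a - 1 = 0 := by
      by_contra hne
      apply hu0
      funext i
      have := key i
      rw [hbz, zero_mul] at this
      exact (mul_eq_zero.mp this).resolve_left hne
    linear_combination hua / 2
  · left
    refine ⟨(2 * a - 1) / b, ?_⟩
    funext i
    have := key i
    simp only [Pi.smul_apply, smul_eq_mul]
    field_simp
    linear_combination -this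
end

section
/- In the spin factor ℂ^n (n ≥ 2) with triple product {x,y,z} = ⟨x,y⟩z + ⟨z,y⟩x − ⟨x, z̄⟩ȳ, let u and e be nonzero tripotents that are minimal, i.e., ⟨u, ū⟩ = 0 and ⟨e, ē⟩ = 0 (so ⟨u,u⟩ = ⟨e,e⟩ = 1/2). Then {u, u, e} = 0 if and only if e = α ū for some complex number α with |α| = 1. -/
open scoped ComplexConjugate

lemma spinIp_smul_left {n : ℕ} (c : ℂ) (x y : Fin n → ℂ) :
    spinIp (c • x) y = c * spinIp x y := by
  simp [spinIp, Finset.mul_sum, mul_assoc]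

lemma spinIp_smul_right {n : ℕ} (c : ℂ) (x y : Fin n → ℂ) :
    spinIp x (c • y) = conj c * spinIp x y := by
  simp only [spinIp, Pi.smul_apply, smul_eq_mul, map_mul, Finset.mul_sum]
  exact Finset.sum_congr rfl fun i _ => by ring

lemma spinIp_sub_left {n : ℕ} (x y z : Fin n → ℂ) :
    spinIp (x - y) z = spinIp x z - spinIp y z := by
  simp [spinIp, sub_mul, Finset.sum_sub_distrib]

lemma spinConj_conj {n : ℕ} (x : Fin n → ℂ) : spinConj (spinConj x) = x := by
  funext i; simp [spinConj]

lemma spinConj_smul {n : ℕ} (c : ℂ) (x : Fin n → ℂ) :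
    spinConj (c • x) = conj c • spinConj x := by
  funext i; simp [spinConj]

lemma spinIp_conj_conj {n : ℕ} (x y : Fin n → ℂ) :
    spinIp (spinConj x) (spinConj y) = conj (spinIp x y) := by
  simp [spinIp, spinConj, map_sum, mul_comm]

lemma spinIp_conj_left {n : ℕ} (x y : Fin n → ℂ) :
    spinIp (spinConj x) y = conj (spinIp x (spinConj y)) := by
  simp [spinIp, spinConj, map_sum]

/-- Two minimal tripotents `u, e` of the spin factor are orthogonal iff
`e` is a unimodular multiple of `ū`. -/
theorem spin_minimal_orthogonal_iff {n : ℕ} (hn : 2 ≤ n) (u e : Fin n → ℂ)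
    (hu0 : u ≠ 0) (he0 : e ≠ 0)
    (hu : spinTriple u u u = u) (he : spinTriple e e e = e)
    (humin : spinIp u (spinConj u) = 0) (hemin : spinIp e (spinConj e) = 0) :
    spinTriple u u e = 0 ↔ ∃ α : ℂ, ‖α‖ = 1 ∧ e = α • spinConj u := by
  have half : ∀ v : Fin n → ℂ, v ≠ 0 → spinTriple v v v = v →
      spinIp v (spinConj v) = 0 → spinIp v v = 1/2 := by
    intro v hv0 hv hvmin
    unfold spinTriple at hv
    rw [hvmin, zero_smul, sub_zero] at hv
    obtain ⟨i, hi⟩ := Function.ne_iff.mp hv0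
    have h := congrFun hv i
    simp only [Pi.add_apply, Pi.smul_apply, smul_eq_mul] at h
    have h2 : (2 * spinIp v v - 1) * v i = 0 := by ring_nf; linear_combination h
    rcases mul_eq_zero.mp h2 with h3 | h3
    · linear_combination h3 / 2
    · exact absurd h3 hi
  have huu : spinIp u u = 1/2 := half u hu0 hu humin
  have hee : spinIp e e = 1/2 := half e he0 he hemin
  have hcu : spinIp (spinConj u) u = 0 := by
    rw [spinIp_conj_left, humin, map_zero]
  have hcc : spinIp (spinConj u) (spinConj u) = 1/2 := by
    rw [spinIp_conj_conj, huu]; simp [Complex.conj_ofNat]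
  constructor
  · intro h
    unfold spinTriple at h
    rw [huu] at h
    set a := spinIp e u with ha
    set b := spinIp u (spinConj e) with hb
    have he2 : e = (2 * b) • spinConj u - (2 * a) • u := by
      funext i
      have hi := congrFun h i
      simp only [Pi.add_apply, Pi.sub_apply, Pi.smul_apply, Pi.zero_apply,
        smul_eq_mul] at hi ⊢
      linear_combination (2 : ℂ) * hi
    have ha0 : a = 0 := by
      have : a = spinIp ((2 * b) • spinConj u - (2 * a) • u) u := by rw [← he2]
      rw [spinIp_sub_left, spinIp_smul_left, spinIp_smul_left, hcu, huu] at this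
      linear_combination this / 2
    rw [ha0, mul_zero, zero_smul, sub_zero] at he2
    have hnorm : (2 * b) * conj (2 * b) = 1 := by
      have : spinIp e e = (2 * b) * (conj (2 * b) * spinIp (spinConj u) (spinConj u)) := by
        rw [he2, spinIp_smul_left, spinIp_smul_right]
      rw [hee, hcc] at this
      linear_combination -2 * this
    refine ⟨2 * b, ?_, he2⟩
    have h1 : Complex.normSq (2 * b) = 1 := by
      have := Complex.mul_conj (2 * b)
      have h2 : ((Complex.normSq (2 * b) : ℂ)) = 1 := by rw [← this]; exact hnorm
      exact_mod_cast h2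
    have h3 : ‖(2 : ℂ) * b‖ ^ 2 = 1 := by
      rw [Complex.sq_norm]
      exact h1
    nlinarith [norm_nonneg ((2 : ℂ) * b)]
  · rintro ⟨α, hα, rfl⟩
    unfold spinTriple
    rw [huu, spinIp_smul_left, hcu, mul_zero, zero_smul, add_zero,
      spinConj_smul, spinConj_conj, spinIp_smul_right, Complex.conj_conj, huu]
    funext i
    simp only [Pi.sub_apply, Pi.smul_apply, Pi.zero_apply, smul_eq_mul]
    ring
end
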